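/- Fix integers a ≥ 3 and ℓ ≥ 0. Let G be a finite simple graph, S ⊆ V(G) with |S| ≥ a, f : S → ℕ with f(s) ≥ 1 for all s ∈ S, and A ⊆ S with |A| = a such that every vertex of A is adjacent in G to two leaves (degree-1 vertices) of G, neither of which lies in S. Let G' be obtained by affixing the spoon gadget Sp(ℓ,a) to G at A, and let v denote the path head of the gadget. Then, for the fragile power domination process on G' with multiset placement M(S,f), Pr_q(v is observed) = Σ_{w∈A} ( q^{f(w)} · Π_{u∈A∖{w}}(1 − q^{f(u)}) ) + Π_{w∈A}(1 − q^{f(w)}); moreover for every vertex v' of the appended path on ℓ vertices, Pr_q(v' is observed) = Pr_q(v is observed). -/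

import Mathlib

open Polynomial

/-- The closed neighborhood `N[S]` of a set of vertices. -/
def closedNbhd {V : Type*} (G : SimpleGraph V) (S : Set V) : Set V :=
  ⋃ v ∈ S, insert v (G.neighborSet v)

/-- A set `B` is closed under the zero forcing step: whenever `x ∈ B` has exactly one
neighbor `y` outside `B`, then `y` is already in `B`. -/
def PDClosed {V : Type*} (G : SimpleGraph V) (B : Set V) : Prop :=
  ∀ x ∈ B, ∀ y : V, G.neighborSet x \ B = {y} → y ∈ B

/-- `Obs G S` is the set of observed vertices of the power domination process started with
PMU placement `S`: the least superset of `N[S]` closed under the zero forcing step. -/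
def Obs {V : Type*} (G : SimpleGraph V) (S : Set V) : Set V :=
  ⋂₀ {B : Set V | closedNbhd G S ⊆ B ∧ PDClosed G B}

/-- The probability (as a polynomial in the failure probability `q`) that the vertex `u`
is observed under the multiset placement `M(S,f)`:
`Pr_q(u) = Σ_{T ⊆ S, u ∈ Obs(G;T)} q^{f(S∖T)} Π_{s∈T}(1 − q^{f(s)})`.
(For `T ⊆ S` we have `f(S∖T) = f(S) − f(T)`.) -/
noncomputable def prObs {V : Type*} (G : SimpleGraph V) (S : Finset V) (f : V → ℕ)
    (u : V) : Polynomial ℝ :=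
  ∑ T ∈ S.powerset,
    Set.indicator (Obs G ↑T)
      (fun _ => X ^ ((∑ v ∈ S, f v) - ∑ v ∈ T, f v) * ∏ v ∈ T, (1 - X ^ f v)) u

/-- The vertices of the graph obtained by affixing the spoon gadget `Sp(ℓ,a)` (for `a ≥ 3`)
to a graph on `V`: the original vertices; a subdivision vertex `sub ⟨(w,i),_⟩` for every
incidence of `w ∈ A*` with the `(a−1)`-set `b_i := A* ∖ {i}` (i.e. for every pair `w ≠ i`);
the vertices `bvert i` representing the `(a−1)`-element subsets `b_i` of `A*`; the connection
vertex `conn`; the path head `head`; and the `ℓ` vertices of the appended path. -/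
inductive SpoonVert (V : Type) (a ℓ : ℕ) : Type
  | orig : V → SpoonVert V a ℓ
  | sub : {p : Fin a × Fin a // p.1 ≠ p.2} → SpoonVert V a ℓ
  | bvert : Fin a → SpoonVert V a ℓ
  | conn : SpoonVert V a ℓ
  | head : SpoonVert V a ℓ
  | path : Fin ℓ → SpoonVert V a ℓ

/-- The adjacency generating relation of the `Sp(ℓ,a)`-extension: original edges of `G`; the
subdivision vertex of the pair `(w,i)` (with `w ∈ b_i`, i.e. `w ≠ i`) is adjacent to the affix
vertex `e w` and to `bvert i`; each `bvert i` is adjacent to the connection vertex; the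
connection vertex is adjacent to the path head; and the appended path on `ℓ` vertices is
attached at the path head. -/
def spoonRel {V : Type} (G : SimpleGraph V) (a ℓ : ℕ) (e : Fin a → V) :
    SpoonVert V a ℓ → SpoonVert V a ℓ → Prop
  | SpoonVert.orig u, SpoonVert.orig v => G.Adj u v
  | SpoonVert.orig u, SpoonVert.sub p => u = e p.1.1
  | SpoonVert.sub p, SpoonVert.bvert i => p.1.2 = i
  | SpoonVert.bvert _, SpoonVert.conn => True
  | SpoonVert.conn, SpoonVert.head => True
  | SpoonVert.head, SpoonVert.path j => (j : ℕ) = 0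
  | SpoonVert.path j, SpoonVert.path j' => (j' : ℕ) = (j : ℕ) + 1
  | _, _ => False

/-- The graph obtained from `G` by affixing the spoon gadget `Sp(ℓ,a)` at
`e 0, …, e (a-1)`. -/
def spoonGraph {V : Type} (G : SimpleGraph V) (a ℓ : ℕ) (e : Fin a → V) :
    SimpleGraph (SpoonVert V a ℓ) :=
  SimpleGraph.fromRel (spoonRel G a ℓ e)

/-- Embedding of the original vertex set into the extended one. -/
def origEmb (V : Type) (a ℓ : ℕ) : V ↪ SpoonVert V a ℓ :=
  ⟨SpoonVert.orig, fun x y h => by injection h⟩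

/-- Extension of a sensor multiplicity function to the extended vertex set (no sensors are
placed on gadget vertices, so the values there are irrelevant). -/
def liftF {V : Type} (a ℓ : ℕ) (f : V → ℕ) : SpoonVert V a ℓ → ℕ
  | SpoonVert.orig v => f v
  | _ => 1

set_option linter.unusedSectionVars false
section
variable {V : Type} {a ℓ : ℕ} {G : SimpleGraph V} {e : Fin a → V}

open SpoonVert

lemma spoon_adj {x y : SpoonVert V a ℓ} : (spoonGraph G a ℓ e).Adj x y ↔
    x ≠ y ∧ (spoonRel G a ℓ e x y ∨ spoonRel G a ℓ e y x) :=
  SimpleGraph.fromRel_adj _ _ _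

lemma nbr_orig {u} {z : SpoonVert V a ℓ} : (spoonGraph G a ℓ e).Adj (orig u) z ↔
    (∃ v, z = orig v ∧ G.Adj u v) ∨ (∃ p, z = sub p ∧ u = e p.1.1) := by
  rw [spoon_adj]
  cases z <;> simp [spoonRel] <;> aesop (add simp [SimpleGraph.adj_comm])

lemma nbr_sub {p} {z : SpoonVert V a ℓ} : (spoonGraph G a ℓ e).Adj (sub p) z ↔
    z = orig (e p.1.1) ∨ z = bvert p.1.2 := by
  rw [spoon_adj]
  cases z <;> simp [spoonRel] <;> aesop

lemma nbr_bvert {i} {z : SpoonVert V a ℓ} : (spoonGraph G a ℓ e).Adj (bvert i) z ↔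
    (∃ p, z = sub p ∧ p.1.2 = i) ∨ z = conn := by
  rw [spoon_adj]
  cases z <;> simp [spoonRel] <;> aesop

lemma nbr_conn {z : SpoonVert V a ℓ} : (spoonGraph G a ℓ e).Adj conn z ↔
    (∃ i, z = bvert i) ∨ z = head := by
  rw [spoon_adj]
  cases z <;> simp [spoonRel]

lemma nbr_head {z : SpoonVert V a ℓ} : (spoonGraph G a ℓ e).Adj head z ↔
    z = conn ∨ ∃ j : Fin ℓ, z = path j ∧ (j : ℕ) = 0 := by
  rw [spoon_adj]
  cases z <;> simp [spoonRel] <;> aesop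

lemma nbr_path {j : Fin ℓ} {z : SpoonVert V a ℓ} : (spoonGraph G a ℓ e).Adj (path j) z ↔
    (∃ j' : Fin ℓ, z = path j' ∧ ((j' : ℕ) = (j : ℕ) + 1 ∨ (j : ℕ) = (j' : ℕ) + 1)) ∨
      (z = head ∧ (j : ℕ) = 0) := by
  rw [spoon_adj]
  cases z <;> simp [spoonRel, Fin.ext_iff] <;> aesop

end
section
variable {V : Type} {a ℓ : ℕ} {G : SimpleGraph V} {e : Fin a ↪ V}

open SpoonVert

lemma force {W : Type*} {H : SimpleGraph W} {B : Set W} (hB : PDClosed H B) {x y : W}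
    (hx : x ∈ B) (hxy : H.Adj x y) (hsub : H.neighborSet x ⊆ insert y B) : y ∈ B := by
  by_cases hy : y ∈ B
  · exact hy
  · refine hB x hx y ?_
    ext z
    simp only [Set.mem_diff, Set.mem_singleton_iff]
    constructor
    · rintro ⟨hz1, hz2⟩
      rcases hsub hz1 with h | h
      · exact h
      · exact absurd h hz2
    · rintro rfl
      exact ⟨hxy, hy⟩

lemma mem_closedNbhd_self {W : Type*} {H : SimpleGraph W} {S : Set W} {v : W} (h : v ∈ S) :
    v ∈ closedNbhd H S := by
  simp only [closedNbhd, Set.mem_iUnion]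
  exact ⟨v, h, Set.mem_insert _ _⟩

lemma mem_closedNbhd_adj {W : Type*} {H : SimpleGraph W} {S : Set W} {v w : W} (h : v ∈ S)
    (hadj : H.Adj v w) : w ∈ closedNbhd H S := by
  simp only [closedNbhd, Set.mem_iUnion]
  exact ⟨v, h, Set.mem_insert_of_mem _ hadj⟩

lemma exists_third (ha : 3 ≤ a) (x y : Fin a) : ∃ z : Fin a, z ≠ x ∧ z ≠ y := by
  by_contra h
  push_neg at h
  have : (Finset.univ : Finset (Fin a)) ⊆ {x, y} := by
    intro z _
    by_cases hz : z = x
    · simp [hz]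
    · simp [h z hz]
  have h2 := Finset.card_le_card this
  simp only [Finset.card_univ, Fintype.card_fin] at h2
  have := Finset.card_insert_le x ({y} : Finset (Fin a))
  simp at this
  omega

/-- Positive direction: if all affix vertices except possibly `e i₀` carry a PMU, then
everything of interest is observed. -/
lemma obs_pos (ha : 3 ≤ a) (T : Finset V) (i₀ : Fin a) (hi₀ : ∀ j, j ≠ i₀ → e j ∈ T)
    {B : Set (SpoonVert V a ℓ)}
    (hcl : closedNbhd (spoonGraph G a ℓ ⇑e) ↑(T.map (origEmb V a ℓ)) ⊆ B)
    (hpd : PDClosed (spoonGraph G a ℓ ⇑e) B) :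
    head ∈ B ∧ ∀ j : Fin ℓ, path j ∈ B := by
  have horig : ∀ j : Fin a, j ≠ i₀ → (orig (e j) : SpoonVert V a ℓ) ∈ B := by
    intro j hj
    refine hcl (mem_closedNbhd_self ?_)
    simp only [Finset.coe_map, Set.mem_image, Finset.mem_coe]
    exact ⟨e j, hi₀ j hj, rfl⟩
  have hsub : ∀ p : {p : Fin a × Fin a // p.1 ≠ p.2}, p.1.1 ≠ i₀ → (sub p : SpoonVert V a ℓ) ∈ B := by
    intro p hp
    refine hcl (mem_closedNbhd_adj (v := orig (e p.1.1)) ?_ ?_)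
    · simp only [Finset.coe_map, Set.mem_image, Finset.mem_coe]
      exact ⟨e p.1.1, hi₀ _ hp, rfl⟩
    · exact nbr_orig.2 (Or.inr ⟨p, rfl, rfl⟩)
  have hbvert : ∀ i : Fin a, (bvert i : SpoonVert V a ℓ) ∈ B := by
    intro i
    obtain ⟨w, hw1, hw2⟩ := exists_third ha i₀ i
    have hwi : w ≠ i := hw2
    refine force hpd (hsub ⟨(w, i), hwi⟩ hw1) (nbr_sub.2 (Or.inr rfl)) ?_
    intro z hz
    rcases nbr_sub.1 hz with rfl | rfl
    · exact Set.mem_insert_of_mem _ (horig w hw1)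
    · exact Set.mem_insert _ _
  have hconn : (conn : SpoonVert V a ℓ) ∈ B := by
    refine force hpd (hbvert i₀) (nbr_bvert.2 (Or.inr rfl)) ?_
    intro z hz
    rcases nbr_bvert.1 hz with ⟨p, rfl, hp⟩ | rfl
    · refine Set.mem_insert_of_mem _ (hsub p ?_)
      exact fun h => p.2 (h.trans hp.symm)
    · exact Set.mem_insert _ _
  have hhead : (head : SpoonVert V a ℓ) ∈ B := by
    refine force hpd hconn (nbr_conn.2 (Or.inr rfl)) ?_
    intro z hz
    rcases nbr_conn.1 hz with ⟨i, rfl⟩ | rfl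
    · exact Set.mem_insert_of_mem _ (hbvert i)
    · exact Set.mem_insert _ _
  refine ⟨hhead, ?_⟩
  have hpath : ∀ k : ℕ, ∀ j : Fin ℓ, (j : ℕ) = k → path j ∈ B := by
    intro k
    induction k using Nat.strong_induction_on with
    | _ k ih =>
      intro j hj
      rcases Nat.eq_zero_or_pos k with rfl | hkpos
      · refine force hpd hhead (nbr_head.2 (Or.inr ⟨j, rfl, hj⟩)) ?_
        intro z hz
        rcases nbr_head.1 hz with rfl | ⟨j', rfl, hj'⟩
        · exact Set.mem_insert_of_mem _ hconn
        · have : j' = j := Fin.ext (hj'.trans hj.symm)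
          subst this
          exact Set.mem_insert _ _
      · have hk : k - 1 < ℓ := by omega
        set j₀ : Fin ℓ := ⟨k - 1, hk⟩ with hj₀def
        have hj₀B : path j₀ ∈ B := ih (k - 1) (by omega) j₀ rfl
        have hadj : (spoonGraph G a ℓ ⇑e).Adj (path j₀) (path j) :=
          nbr_path.2 (Or.inl ⟨j, rfl, Or.inl (by simp [hj₀def]; omega)⟩)
        refine force hpd hj₀B hadj ?_
        intro z hz
        rcases nbr_path.1 hz with ⟨j', rfl, hj' | hj'⟩ | ⟨rfl, hj'⟩
        · have : j' = j := Fin.ext (by simp only [hj₀def] at hj' ⊢; omega)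
          subst this
          exact Set.mem_insert _ _
        · simp only [hj₀def] at hj'
          have hk2 : (j' : ℕ) = k - 2 := by omega
          have hklb : 2 ≤ k := by omega
          exact Set.mem_insert_of_mem _ (ih (k - 2) (by omega) j' hk2)
        · exact Set.mem_insert_of_mem _ hhead
  exact fun j => hpath j j rfl

end
section
variable {V : Type} {a ℓ : ℕ} {G : SimpleGraph V} {e : Fin a ↪ V}

open SpoonVert

/-- The blocking set for the negative direction: everything except the gadget interior and the
subdivision vertices attached to the two affix vertices `e i₀`, `e i₁` missing a PMU. -/
def badSet (V : Type) (a ℓ : ℕ) (i₀ i₁ : Fin a) : Set (SpoonVert V a ℓ) :=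
  {x | match x with
    | SpoonVert.orig _ => True
    | SpoonVert.sub p => p.1.1 ≠ i₀ ∧ p.1.1 ≠ i₁
    | SpoonVert.bvert _ => True
    | _ => False}

lemma pd_two {W : Type*} {H : SimpleGraph W} {B : Set W} {x y z₁ z₂ : W}
    (h1 : H.Adj x z₁) (h2 : H.Adj x z₂) (hz : z₁ ≠ z₂) (hb1 : z₁ ∉ B) (hb2 : z₂ ∉ B)
    (heq : H.neighborSet x \ B = {y}) : y ∈ B := by
  exfalso
  have e1 : z₁ ∈ H.neighborSet x \ B := ⟨h1, hb1⟩
  have e2 : z₂ ∈ H.neighborSet x \ B := ⟨h2, hb2⟩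
  rw [heq] at e1 e2
  exact hz (e1.trans e2.symm)

lemma pd_all {W : Type*} {H : SimpleGraph W} {B : Set W} {x y : W}
    (h : H.neighborSet x ⊆ B) (heq : H.neighborSet x \ B = {y}) : y ∈ B := by
  have : y ∈ H.neighborSet x \ B := heq ▸ rfl
  exact absurd (h this.1) this.2

lemma badSet_closed (ha : 3 ≤ a) {i₀ i₁ : Fin a} (h01 : i₀ ≠ i₁) :
    PDClosed (spoonGraph G a ℓ ⇑e) (badSet V a ℓ i₀ i₁) := by
  intro x hx y heq
  match x with
  | SpoonVert.orig u =>
    by_cases h0 : u = e i₀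
    · obtain ⟨z, hz0, hz1⟩ := exists_third ha i₀ i₁
      obtain ⟨z', hz'0, hz'z⟩ := exists_third ha i₀ z
      refine pd_two (z₁ := SpoonVert.sub ⟨(i₀, z), Ne.symm hz0⟩)
        (z₂ := SpoonVert.sub ⟨(i₀, z'), Ne.symm hz'0⟩)
        (nbr_orig.2 (Or.inr ⟨_, rfl, h0⟩)) (nbr_orig.2 (Or.inr ⟨_, rfl, h0⟩))
        ?_ (fun h => h.1 rfl) (fun h => h.1 rfl) heq
      intro h
      simp only [SpoonVert.sub.injEq, Subtype.mk.injEq, Prod.mk.injEq] at h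
      exact hz'z h.2.symm
    · by_cases h1 : u = e i₁
      · obtain ⟨z, hz1, hz0⟩ := exists_third ha i₁ i₀
        obtain ⟨z', hz'1, hz'z⟩ := exists_third ha i₁ z
        refine pd_two (z₁ := SpoonVert.sub ⟨(i₁, z), Ne.symm hz1⟩)
          (z₂ := SpoonVert.sub ⟨(i₁, z'), Ne.symm hz'1⟩)
          (nbr_orig.2 (Or.inr ⟨_, rfl, h1⟩)) (nbr_orig.2 (Or.inr ⟨_, rfl, h1⟩))
          ?_ (fun h => h.2 rfl) (fun h => h.2 rfl) heq
        intro h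
        simp only [SpoonVert.sub.injEq, Subtype.mk.injEq, Prod.mk.injEq] at h
        exact hz'z h.2.symm
      · refine pd_all ?_ heq
        intro z hz
        rcases nbr_orig.1 hz with ⟨v, rfl, _⟩ | ⟨p, rfl, hp⟩
        · trivial
        · refine ⟨?_, ?_⟩ <;> rintro rfl
          · exact h0 hp
          · exact h1 hp
  | SpoonVert.sub p =>
    refine pd_all ?_ heq
    intro z hz
    rcases nbr_sub.1 hz with rfl | rfl
    · trivial
    · trivial
  | SpoonVert.bvert i =>
    by_cases h0 : i = i₀
    · subst h0
      have h1 : i₁ ≠ i := h01.symm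
      refine pd_two (z₁ := SpoonVert.sub ⟨(i₁, i), h1⟩) (z₂ := SpoonVert.conn)
        (nbr_bvert.2 (Or.inl ⟨_, rfl, rfl⟩)) (nbr_bvert.2 (Or.inr rfl))
        (fun h => by cases h) (fun h => h.2 rfl) (fun h => h) heq
    · have h0' : (i₀ : Fin a) ≠ i := fun h => h0 h.symm
      refine pd_two (z₁ := SpoonVert.sub ⟨(i₀, i), h0'⟩) (z₂ := SpoonVert.conn)
        (nbr_bvert.2 (Or.inl ⟨_, rfl, rfl⟩)) (nbr_bvert.2 (Or.inr rfl))
        (fun h => by cases h) (fun h => h.1 rfl) (fun h => h) heq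
  | SpoonVert.conn => exact hx.elim
  | SpoonVert.head => exact hx.elim
  | SpoonVert.path j => exact hx.elim

lemma badSet_closedNbhd {T : Finset V} {i₀ i₁ : Fin a} (h0 : e i₀ ∉ T) (h1 : e i₁ ∉ T) :
    closedNbhd (spoonGraph G a ℓ ⇑e) ↑(T.map (origEmb V a ℓ)) ⊆ badSet V a ℓ i₀ i₁ := by
  intro x hx
  simp only [closedNbhd, Set.mem_iUnion] at hx
  obtain ⟨v, hv, hx⟩ := hx
  simp only [Finset.coe_map, Set.mem_image, Finset.mem_coe] at hv
  obtain ⟨t, ht, rfl⟩ := hv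
  rcases hx with rfl | hx
  · trivial
  · rcases nbr_orig.1 hx with ⟨w, rfl, _⟩ | ⟨p, rfl, hp⟩
    · trivial
    · refine ⟨?_, ?_⟩ <;> rintro rfl
      · exact h0 (hp ▸ ht)
      · exact h1 (hp ▸ ht)

end
section
variable {V : Type} {a ℓ : ℕ} {G : SimpleGraph V} {e : Fin a ↪ V}

lemma obs_iff (ha : 3 ≤ a) (T : Finset V) (u : SpoonVert V a ℓ)
    (hu : u = SpoonVert.head ∨ ∃ j, u = SpoonVert.path j) :
    u ∈ Obs (spoonGraph G a ℓ ⇑e) ↑(T.map (origEmb V a ℓ)) ↔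
      ∃ i₀ : Fin a, ∀ j, j ≠ i₀ → e j ∈ T := by
  constructor
  · intro h
    by_contra hP
    push_neg at hP
    have ha0 : 0 < a := by omega
    obtain ⟨j₁, hj₁ne, hj₁⟩ := hP ⟨0, ha0⟩
    obtain ⟨j₂, hj₂ne, hj₂⟩ := hP j₁
    have hmem : u ∈ badSet V a ℓ j₁ j₂ :=
      h _ ⟨badSet_closedNbhd hj₁ hj₂, badSet_closed ha (Ne.symm hj₂ne)⟩
    rcases hu with rfl | ⟨j, rfl⟩
    · exact hmem
    · exact hmem
  · rintro ⟨i₀, hi₀⟩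
    intro B hB
    obtain ⟨hh, hp⟩ := obs_pos ha T i₀ hi₀ hB.1 hB.2
    rcases hu with rfl | ⟨j, rfl⟩
    · exact hh
    · exact hp j

lemma powerset_map' {α β : Type*} [DecidableEq α] [DecidableEq β] (emb : α ↪ β) (S : Finset α) :
    (S.map emb).powerset = S.powerset.image (fun T => T.map emb) := by
  ext T'
  simp only [Finset.mem_powerset, Finset.mem_image]
  constructor
  · intro h
    obtain ⟨u, hu, rfl⟩ := Finset.subset_map_iff.1 h
    exact ⟨u, hu, rfl⟩
  · rintro ⟨u, hu, rfl⟩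
    exact Finset.map_subset_map.2 hu

lemma prObs_eq [DecidableEq V] (ha : 3 ≤ a) (S : Finset V) (f : V → ℕ) (u : SpoonVert V a ℓ)
    (hu : u = SpoonVert.head ∨ ∃ j, u = SpoonVert.path j) :
    prObs (spoonGraph G a ℓ ⇑e) (S.map (origEmb V a ℓ)) (liftF a ℓ f) u
      = ∑ T ∈ S.powerset, if ∃ i₀ : Fin a, ∀ j, j ≠ i₀ → e j ∈ T then
          X ^ ((∑ v ∈ S, f v) - ∑ v ∈ T, f v) * ∏ v ∈ T, (1 - X ^ f v) else 0 := by
  classical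
  unfold prObs
  rw [powerset_map' (origEmb V a ℓ) S,
    Finset.sum_image (fun x _ y _ h => Finset.map_injective (origEmb V a ℓ) h)]
  refine Finset.sum_congr rfl ?_
  intro T _
  rw [Set.indicator_apply]
  have h1 : ∑ v ∈ S.map (origEmb V a ℓ), liftF a ℓ f v = ∑ v ∈ S, f v :=
    Finset.sum_map _ _ _
  have h2 : ∑ v ∈ T.map (origEmb V a ℓ), liftF a ℓ f v = ∑ v ∈ T, f v :=
    Finset.sum_map _ _ _
  have h3 : ∏ v ∈ T.map (origEmb V a ℓ), (1 - (X : Polynomial ℝ) ^ liftF a ℓ f v)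
      = ∏ v ∈ T, (1 - (X : Polynomial ℝ) ^ f v) := Finset.prod_map _ _ _
  rw [h1, h2, h3, if_congr (obs_iff ha T u hu) rfl rfl]

lemma sum_powerset_union {α β : Type*} [DecidableEq α] [AddCommMonoid β] {u v : Finset α}
    (F : Finset α → β) (huv : Disjoint u v) :
    ∑ T ∈ (u ∪ v).powerset, F T = ∑ T₁ ∈ u.powerset, ∑ T₂ ∈ v.powerset, F (T₁ ∪ T₂) := by
  induction v using Finset.induction_on generalizing F with
  | empty => simp
  | @insert x v hx ih =>
    have hd : Disjoint u v := huv.mono_right (Finset.subset_insert x v)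
    have hxu : x ∉ u := fun h =>
      (Finset.disjoint_left.1 huv h) (Finset.mem_insert_self x v)
    have hxuv : x ∉ u ∪ v := by simp [hxu, hx]
    rw [Finset.union_insert, Finset.sum_powerset_insert hxuv, ih F hd,
      ih (fun T => F (insert x T)) hd, ← Finset.sum_add_distrib]
    refine Finset.sum_congr rfl ?_
    intro T₁ _
    rw [Finset.sum_powerset_insert hx]
    congr 1
    refine Finset.sum_congr rfl ?_
    intro T₂ _
    rw [Finset.union_insert]

end
section
open Finset

lemma cond_iff {V : Type} [DecidableEq V] {a : ℕ} {A : Finset V} {e : Fin a ↪ V}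
    (he : Finset.univ.map e = A) (T : Finset V) :
    (∃ i₀ : Fin a, ∀ j, j ≠ i₀ → e j ∈ T) ↔ ∃ w ∈ A, A.erase w ⊆ T := by
  constructor
  · rintro ⟨i₀, hi₀⟩
    refine ⟨e i₀, ?_, ?_⟩
    · rw [← he]; exact mem_map_of_mem e (mem_univ i₀)
    · intro x hx
      have hxA : x ∈ A := mem_of_mem_erase hx
      rw [← he, mem_map] at hxA
      obtain ⟨j, -, rfl⟩ := hxA
      refine hi₀ j fun h => ?_
      exact (ne_of_mem_erase hx) (by rw [h])
  · rintro ⟨w, hw, hsub⟩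
    have hw' : w ∈ Finset.univ.map e := he.symm ▸ hw
    rw [mem_map] at hw'
    obtain ⟨i₀, -, rfl⟩ := hw'
    refine ⟨i₀, fun j hj => hsub ?_⟩
    refine mem_erase.2 ⟨fun h => hj (e.injective h), ?_⟩
    rw [← he]; exact mem_map_of_mem e (mem_univ j)

lemma filter_cond {V : Type} [DecidableEq V] (A : Finset V) (hA : A.Nonempty) :
    A.powerset.filter (fun T => ∃ w ∈ A, A.erase w ⊆ T)
      = insert A (A.image (fun w => A.erase w)) := by
  ext T
  simp only [mem_filter, mem_powerset, mem_insert, mem_image]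
  constructor
  · rintro ⟨hTA, w, hw, hsub⟩
    by_cases hwT : w ∈ T
    · left
      refine Subset.antisymm hTA ?_
      intro x hx
      by_cases hxw : x = w
      · exact hxw ▸ hwT
      · exact hsub (mem_erase.2 ⟨hxw, hx⟩)
    · right
      refine ⟨w, hw, Subset.antisymm hsub ?_⟩
      intro x hx
      exact mem_erase.2 ⟨fun h => hwT (h ▸ hx), hTA hx⟩
  · rintro (rfl | ⟨w, hw, rfl⟩)
    · obtain ⟨w, hw⟩ := hA
      exact ⟨Subset.refl _, w, hw, erase_subset _ _⟩
    · exact ⟨erase_subset _ _, w, hw, Subset.refl _⟩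

lemma poly_ident {V : Type} [DecidableEq V] {a : ℕ} (ha : 3 ≤ a) (S : Finset V) (f : V → ℕ)
    (A : Finset V) (hAS : A ⊆ S) (hAcard : A.card = a) (e : Fin a ↪ V)
    (he : Finset.univ.map e = A) :
    ∑ T ∈ S.powerset, (if ∃ i₀ : Fin a, ∀ j, j ≠ i₀ → e j ∈ T then
        X ^ ((∑ v ∈ S, f v) - ∑ v ∈ T, f v) * ∏ v ∈ T, (1 - X ^ f v) else (0 : Polynomial ℝ))
      = (∑ w ∈ A, X ^ f w * ∏ u ∈ A.erase w, (1 - X ^ f u)) + ∏ w ∈ A, (1 - X ^ f w) := by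
  classical
  have hA : A.Nonempty := by
    rw [← Finset.card_pos, hAcard]; omega
  -- Step 1: rewrite condition and exponent
  have step1 : ∑ T ∈ S.powerset, (if ∃ i₀ : Fin a, ∀ j, j ≠ i₀ → e j ∈ T then
        X ^ ((∑ v ∈ S, f v) - ∑ v ∈ T, f v) * ∏ v ∈ T, (1 - X ^ f v) else (0 : Polynomial ℝ))
      = ∑ T ∈ S.powerset, (if ∃ w ∈ A, A.erase w ⊆ T then
        X ^ (∑ v ∈ S \ T, f v) * ∏ v ∈ T, (1 - X ^ f v) else (0 : Polynomial ℝ)) := by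
    refine sum_congr rfl fun T hT => ?_
    rw [mem_powerset] at hT
    have hexp : (∑ v ∈ S, f v) - ∑ v ∈ T, f v = ∑ v ∈ S \ T, f v := by
      have := Finset.sum_sdiff (f := f) hT
      omega
    rw [hexp, if_congr (cond_iff he T) rfl rfl]
  rw [step1]
  -- Step 2: decompose S as A ∪ (S \ A)
  have hdisj : Disjoint A (S \ A) := Finset.disjoint_sdiff
  have hunion : A ∪ (S \ A) = S := Finset.union_sdiff_of_subset hAS
  rw [← hunion, sum_powerset_union _ hdisj]
  -- Step 3: factor each term
  have step3 : ∀ T₁ ∈ A.powerset, ∀ T₂ ∈ (S \ A).powerset,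
      (if ∃ w ∈ A, A.erase w ⊆ T₁ ∪ T₂ then
        X ^ (∑ v ∈ (A ∪ (S \ A)) \ (T₁ ∪ T₂), f v) * ∏ v ∈ T₁ ∪ T₂, (1 - X ^ f v)
        else (0 : Polynomial ℝ))
      = (if ∃ w ∈ A, A.erase w ⊆ T₁ then
          X ^ (∑ v ∈ A \ T₁, f v) * ∏ v ∈ T₁, (1 - X ^ f v) else (0 : Polynomial ℝ))
        * (X ^ (∑ v ∈ (S \ A) \ T₂, f v) * ∏ v ∈ T₂, (1 - X ^ f v)) := by
    intro T₁ hT₁ T₂ hT₂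
    rw [mem_powerset] at hT₁ hT₂
    have hd12 : Disjoint T₁ T₂ := hdisj.mono hT₁ hT₂
    have h2A : ∀ x ∈ T₂, x ∉ A := fun x hx => (mem_sdiff.1 (hT₂ hx)).2
    have hcond : (∃ w ∈ A, A.erase w ⊆ T₁ ∪ T₂) ↔ ∃ w ∈ A, A.erase w ⊆ T₁ := by
      refine exists_congr fun w => and_congr_right fun hw => ⟨fun h x hx => ?_, fun h =>
        h.trans subset_union_left⟩
      rcases mem_union.1 (h hx) with h' | h'
      · exact h'
      · exact absurd (mem_of_mem_erase hx) (h2A x h')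
    have hsdiff : (A ∪ (S \ A)) \ (T₁ ∪ T₂) = (A \ T₁) ∪ ((S \ A) \ T₂) := by
      ext x
      simp only [mem_sdiff, mem_union]
      constructor
      · rintro ⟨hx1 | ⟨hxS, hxA⟩, hx2⟩
        · exact Or.inl ⟨hx1, fun h => hx2 (Or.inl h)⟩
        · exact Or.inr ⟨⟨hxS, hxA⟩, fun h => hx2 (Or.inr h)⟩
      · rintro (⟨hx1, hx2⟩ | ⟨⟨hxS, hxA⟩, hx2⟩)
        · exact ⟨Or.inl hx1, fun h => h.elim hx2 (fun h' => h2A x h' hx1)⟩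
        · exact ⟨Or.inr ⟨hxS, hxA⟩, fun h => h.elim (fun h' => hxA (hT₁ h')) hx2⟩
    have hdsd : Disjoint (A \ T₁) ((S \ A) \ T₂) :=
      hdisj.mono (sdiff_subset) (sdiff_subset)
    rw [if_congr hcond rfl rfl, hsdiff, Finset.sum_union hdsd, pow_add,
      Finset.prod_union hd12]
    by_cases hc : ∃ w ∈ A, A.erase w ⊆ T₁
    · rw [if_pos hc, if_pos hc]; ring
    · rw [if_neg hc, if_neg hc, zero_mul]
  rw [Finset.sum_congr rfl fun T₁ hT₁ => Finset.sum_congr rfl (step3 T₁ hT₁)]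
  -- Step 4: inner sum equals 1
  have hsum1 : ∑ T₂ ∈ (S \ A).powerset,
      X ^ (∑ v ∈ (S \ A) \ T₂, f v) * ∏ v ∈ T₂, (1 - X ^ f v) = (1 : Polynomial ℝ) := by
    calc ∑ T₂ ∈ (S \ A).powerset,
            (X : Polynomial ℝ) ^ (∑ v ∈ (S \ A) \ T₂, f v) * ∏ v ∈ T₂, (1 - X ^ f v)
        = ∑ T₂ ∈ (S \ A).powerset,
            (∏ v ∈ T₂, (1 - (X : Polynomial ℝ) ^ f v)) *
              ∏ v ∈ (S \ A) \ T₂, (X : Polynomial ℝ) ^ f v := by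
          refine sum_congr rfl fun T₂ _ => ?_
          rw [Finset.prod_pow_eq_pow_sum, mul_comm]
      _ = ∏ i ∈ S \ A, (1 - (X : Polynomial ℝ) ^ f i + X ^ f i) := (Finset.prod_add _ _ _).symm
      _ = 1 := by simp
  have step4 : ∀ T₁ ∈ A.powerset,
      ∑ T₂ ∈ (S \ A).powerset,
        ((if ∃ w ∈ A, A.erase w ⊆ T₁ then
          X ^ (∑ v ∈ A \ T₁, f v) * ∏ v ∈ T₁, (1 - X ^ f v) else (0 : Polynomial ℝ))
        * (X ^ (∑ v ∈ (S \ A) \ T₂, f v) * ∏ v ∈ T₂, (1 - X ^ f v)))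
      = (if ∃ w ∈ A, A.erase w ⊆ T₁ then
          X ^ (∑ v ∈ A \ T₁, f v) * ∏ v ∈ T₁, (1 - X ^ f v) else (0 : Polynomial ℝ)) := by
    intro T₁ _
    rw [← Finset.mul_sum, hsum1, mul_one]
  rw [Finset.sum_congr rfl step4]
  -- Step 5: evaluate the sum over subsets of A
  rw [← Finset.sum_filter, filter_cond A hA]
  have hAnotin : A ∉ A.image (fun w => A.erase w) := by
    rw [mem_image]
    rintro ⟨w, hw, hAw⟩
    have := Finset.card_erase_of_mem hw
    rw [hAw] at this
    omega
  have hinj : ∀ w ∈ A, ∀ w' ∈ A, A.erase w = A.erase w' → w = w' := by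
    intro w hw w' hw' h
    by_contra hne
    have : w ∈ A.erase w' := mem_erase.2 ⟨hne, hw⟩
    rw [← h] at this
    exact notMem_erase w A this
  rw [Finset.sum_insert hAnotin, Finset.sum_image hinj, sdiff_self]
  have hterm : ∀ w ∈ A, X ^ (∑ v ∈ A \ A.erase w, f v) * ∏ v ∈ A.erase w, (1 - X ^ f v)
      = X ^ f w * ∏ u ∈ A.erase w, (1 - (X : Polynomial ℝ) ^ f u) := by
    intro w hw
    rw [Finset.sdiff_erase_self hw, Finset.sum_singleton]
  rw [Finset.sum_congr rfl hterm]
  simp [add_comm]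

end

theorem stmt14 {V : Type} [Fintype V] [DecidableEq V] (a ℓ : ℕ) (ha : 3 ≤ a)
    (G : SimpleGraph V) (S : Finset V) (hS : a ≤ S.card)
    (f : V → ℕ) (hf : ∀ v ∈ S, 1 ≤ f v)
    (A : Finset V) (hAS : A ⊆ S) (hAcard : A.card = a)
    (e : Fin a ↪ V) (he : Finset.univ.map e = A)
    (hleaves : ∀ v ∈ A, ∃ l₁ l₂ : V, l₁ ≠ l₂ ∧ l₁ ∉ S ∧ l₂ ∉ S ∧
        G.neighborSet l₁ = {v} ∧ G.neighborSet l₂ = {v}) :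
    prObs (spoonGraph G a ℓ ⇑e) (S.map (origEmb V a ℓ)) (liftF a ℓ f) SpoonVert.head
        = (∑ w ∈ A, X ^ f w * ∏ u ∈ A.erase w, (1 - X ^ f u))
            + ∏ w ∈ A, (1 - X ^ f w) ∧
      ∀ j : Fin ℓ,
        prObs (spoonGraph G a ℓ ⇑e) (S.map (origEmb V a ℓ)) (liftF a ℓ f)
            (SpoonVert.path j)
          = prObs (spoonGraph G a ℓ ⇑e) (S.map (origEmb V a ℓ)) (liftF a ℓ f)
              SpoonVert.head := by
  constructor
  · rw [prObs_eq ha S f SpoonVert.head (Or.inl rfl)]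
    exact poly_ident ha S f A hAS hAcard e he
  · intro j
    rw [prObs_eq ha S f (SpoonVert.path j) (Or.inr ⟨j, rfl⟩),
      prObs_eq ha S f SpoonVert.head (Or.inl rfl)]
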